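/- arXiv:2509.20730 — 6 statements merged into one kernel-verified Lean document; each statement's English description precedes it below -/
import Mathlib

section
/- For a synchronous automaton whose updates are s_r ← ∧_{δ∈R^∧} s_{r+δ} on even steps and s_r ← ∨_{δ∈R^∨} s_{r+δ} on odd steps, if R^∨ = R_π(R^∧) where R_π is rotation by π (negation of vectors), then every configuration consisting of two half-plane domains separated by a single straight domain wall is invariant (up to the appropriate parity) in the sense that the domain wall does not move: the drift velocity of any infinite straight domain wall is zero. -/
/-- The OR update over offsets `Rv`: result is +1 (`true`) unless all spins in
the neighborhood are −1. -/
def orUpd (Rv : Finset (ℤ × ℤ)) (s : ℤ × ℤ → Bool) : ℤ × ℤ → Bool :=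
  fun r => decide (∃ δ ∈ Rv, s (r + δ) = true)

/-- The AND update over offsets `Rw`: result is −1 (`false`) unless all spins
in the neighborhood are +1. -/
def andUpd (Rw : Finset (ℤ × ℤ)) (s : ℤ × ℤ → Bool) : ℤ × ℤ → Bool :=
  fun r => decide (∀ δ ∈ Rw, s (r + δ) = true)

/-- One combined synchronous step: the AND update (even substep) followed by
the OR update (odd substep). -/
def sqzStep (Rw Rv : Finset (ℤ × ℤ)) (s : ℤ × ℤ → Bool) : ℤ × ℤ → Bool :=
  orUpd Rv (andUpd Rw s)

/-- The half-plane domain-wall configuration with normal `n` and offset `a`: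
+1 on `{r : r·n > a}` and −1 on its complement. -/
def halfPlane (n : ℤ × ℤ) (a : ℤ) : ℤ × ℤ → Bool :=
  fun r => decide (a < r.1 * n.1 + r.2 * n.2)

/-- If `R^∨ = R_π(R^∧)` (rotation by π, i.e. negation of all offsets), then a
straight infinite domain wall cannot drift: if the combined update maps a
half-plane domain-wall state to a translate of itself, the translation must be
trivial on the wall, i.e. the wall does not move. -/
theorem wall_does_not_move_of_pi_rotation
    (Rw Rv : Finset (ℤ × ℤ)) (hsym : Rv = Rw.image (fun δ => -δ))
    (n : ℤ × ℤ) (hn : n ≠ 0) (a : ℤ) (v : ℤ × ℤ)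
    (hmove : sqzStep Rw Rv (halfPlane n a) = fun r => halfPlane n a (r - v)) :
    sqzStep Rw Rv (halfPlane n a) = halfPlane n a := by
  rcases Rw.eq_empty_or_nonempty with h | h
  · -- empty case: contradiction with hmove
    exfalso
    subst h
    have hRv : Rv = ∅ := by simpa using hsym
    subst hRv
    have hN : 1 ≤ n.1 * n.1 + n.2 * n.2 := by
      rcases (Prod.mk.injEq _ _ _ _ ▸ hn : ¬(n.1 = 0 ∧ n.2 = 0)) with hne
      rcases eq_or_ne n.1 0 with h1 | h1
      · have h2 : n.2 ≠ 0 := fun h2 => hne ⟨h1, h2⟩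
        nlinarith [sq_nonneg n.1, Int.one_le_abs h2, sq_abs n.2]
      · nlinarith [sq_nonneg n.2, Int.one_le_abs h1, sq_abs n.1]
    set k : ℤ := |a| + 1 with hk
    set r : ℤ × ℤ := (v.1 + k * n.1, v.2 + k * n.2) with hr
    have := congrFun hmove r
    simp only [sqzStep, orUpd, Finset.notMem_empty, false_and, exists_false,
      decide_false, halfPlane] at this
    have hgt : a < (r - v).1 * n.1 + (r - v).2 * n.2 := by
      have : (r - v).1 = k * n.1 ∧ (r - v).2 = k * n.2 := by
        constructor <;> simp [hr]
      rcases this with ⟨h1, h2⟩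
      rw [h1, h2]
      have hk1 : 0 < k := by positivity
      have : k ≤ k * (n.1 * n.1 + n.2 * n.2) := le_mul_of_one_le_right hk1.le hN
      have ha : a < k := by
        calc a ≤ |a| := le_abs_self a
        _ < k := by omega
      nlinarith
    rw [← decide_eq_true_eq (p := a < (r - v).1 * n.1 + (r - v).2 * n.2)] at hgt
    rw [← this] at hgt
    exact Bool.false_ne_true hgt
  · funext r
    obtain ⟨δ₀, hδ₀, hmin⟩ := Finset.exists_min_image Rw
      (fun δ => δ.1 * n.1 + δ.2 * n.2) h
    show orUpd Rv (andUpd Rw (halfPlane n a)) r = halfPlane n a r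
    unfold orUpd andUpd halfPlane
    rw [Bool.eq_iff_iff]
    simp only [orUpd, andUpd, halfPlane, hsym, Finset.mem_image,
      decide_eq_true_eq, decide_eq_decide]
    constructor
    · rintro ⟨ε, ⟨δ₁, hδ₁, rfl⟩, hε⟩
      have h1 := hε δ₁ hδ₁
      have e1 : (r + -δ₁ + δ₁).1 = r.1 := by simp
      have e2 : (r + -δ₁ + δ₁).2 = r.2 := by simp
      rwa [e1, e2] at h1
    · intro ha
      refine ⟨-δ₀, ⟨δ₀, hδ₀, rfl⟩, fun δ hδ => ?_⟩
      have hm := hmin δ hδ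
      have e1 : (r + -δ₀ + δ).1 = r.1 - δ₀.1 + δ.1 := by
        simp [Prod.fst_add]; ring
      have e2 : (r + -δ₀ + δ).2 = r.2 - δ₀.2 + δ.2 := by
        simp [Prod.snd_add]; ring
      rw [e1, e2]
      nlinarith [hm]
end

section
/- Under noiseless asynchronous R dynamics on a torus (Z/LZ)^2 with L ≥ 2, the only absorbing states are the all-plus and all-minus configurations. Precisely: if a configuration s is such that no single-site OR update s_r ← s_{r+x̂} ∨ s_r ∨ s_{r−x̂} and no single-site AND update s_r ← s_{r+ŷ} ∧ s_r ∧ s_{r−ŷ} changes any spin, then s is constant. -/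
/-- Under noiseless asynchronous R dynamics on the torus `(ℤ/Lℤ)²` with
`L ≥ 2` (`true` = +1, `false` = −1), if no single-site OR update
`s_r ← s_{r+x̂} ∨ s_r ∨ s_{r−x̂}` and no single-site AND update
`s_r ← s_{r+ŷ} ∧ s_r ∧ s_{r−ŷ}` changes any spin, then `s` is constant:
the only absorbing states are all-plus and all-minus. -/
theorem absorbing_states_R (L : ℕ) (hL : 2 ≤ L)
    (s : ZMod L × ZMod L → Bool)
    (hOr : ∀ r : ZMod L × ZMod L,
      s r = (s (r.1 + 1, r.2) || s r || s (r.1 - 1, r.2)))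
    (hAnd : ∀ r : ZMod L × ZMod L,
      s r = (s (r.1, r.2 + 1) && s r && s (r.1, r.2 - 1))) :
    (∀ r, s r = true) ∨ (∀ r, s r = false) := by
  haveI : NeZero L := ⟨by omega⟩
  by_cases hall : ∀ r, s r = true
  · exact Or.inl hall
  push_neg at hall
  obtain ⟨r0, hr0⟩ := hall
  have hr0' : s r0 = false := by simpa using hr0
  right
  -- horizontal false propagation
  have hstep : ∀ a b : ZMod L, s (a, b) = false → s (a + 1, b) = false := by
    intro a b h
    have h2 := hOr (a, b)
    simp only [h] at h2
    have := (Bool.or_eq_false_iff.mp (Bool.or_eq_false_iff.mp h2.symm).1).1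
    simpa using this
  have hrow : ∀ (n : ℕ) (a b : ZMod L), s (a, b) = false → s (a + n, b) = false := by
    intro n
    induction n with
    | zero => simpa using fun a b h => h
    | succ k ih =>
      intro a b h
      have := hstep (a + k) b (ih a b h)
      have e : a + (↑(k + 1) : ZMod L) = a + k + 1 := by push_cast; ring
      rw [e]
      exact this
  -- vertical true propagation
  have vstep : ∀ a b : ZMod L, s (a, b) = true → s (a, b + 1) = true := by
    intro a b h
    have h2 := hAnd (a, b)
    simp only [h] at h2
    have := (Bool.and_eq_true_iff.mp (Bool.and_eq_true_iff.mp h2.symm).1).1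
    simpa using this
  have vcol : ∀ (n : ℕ) (a b : ZMod L), s (a, b) = true → s (a, b + n) = true := by
    intro n
    induction n with
    | zero => simpa using fun a b h => h
    | succ k ih =>
      intro a b h
      have := vstep a (b + k) (ih a b h)
      have e : b + (↑(k + 1) : ZMod L) = b + k + 1 := by push_cast; ring
      rw [e]
      exact this
  -- whole row of r0 is false
  have hrow0 : ∀ a : ZMod L, s (a, r0.2) = false := by
    intro a
    have := hrow (a - r0.1).val r0.1 r0.2 (by simpa using hr0')
    have e : r0.1 + ((a - r0.1).val : ZMod L) = a := by
      rw [ZMod.natCast_val, ZMod.cast_id]; ring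
    rwa [e] at this
  intro r
  by_contra hc
  have ht : s r = true := by simpa using hc
  have := vcol (r0.2 - r.2).val r.1 r.2 (by simpa using ht)
  have e : r.2 + ((r0.2 - r.2).val : ZMod L) = r0.2 := by
    rw [ZMod.natCast_val, ZMod.cast_id]; ring
  rw [e] at this
  rw [hrow0 r.1] at this
  exact Bool.false_ne_true this
end

section
/- Under noiseless asynchronous F dynamics on a torus, the only absorbing states are the all-plus and all-minus configurations, where the F rule uses OR over {x̂, −x̂−ŷ} and AND over {x̂+ŷ, −ŷ}. -/
/-- Under noiseless asynchronous F dynamics on the torus `(ℤ/Lℤ)²` with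
`L ≥ 2` (`true` = +1, `false` = −1), if no single-site OR update
`s_r ← s_{r+x̂} ∨ s_{r−x̂−ŷ}` and no single-site AND update
`s_r ← s_{r+x̂+ŷ} ∧ s_{r−ŷ}` changes any spin, then `s` is constant:
the only absorbing states are all-plus and all-minus. -/
theorem absorbing_states_F (L : ℕ) (hL : 2 ≤ L)
    (s : ZMod L × ZMod L → Bool)
    (hOr : ∀ r : ZMod L × ZMod L,
      s r = (s (r.1 + 1, r.2) || s (r.1 - 1, r.2 - 1)))
    (hAnd : ∀ r : ZMod L × ZMod L,
      s r = (s (r.1 + 1, r.2 + 1) && s (r.1, r.2 - 1))) :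
    (∀ r, s r = true) ∨ (∀ r, s r = false) := by
  by_cases h : ∀ r, s r = true
  · exact Or.inl h
  right
  push_neg at h
  obtain ⟨r0, hr0⟩ := h
  rw [ne_eq, Bool.not_eq_true] at hr0
  have key : ∀ r : ZMod L × ZMod L, s r = false →
      s (r.1 + 1, r.2) = false ∧ s (r.1 - 1, r.2 - 1) = false := by
    intro r hr
    have h1 := hOr r
    rw [hr] at h1
    exact ⟨(Bool.or_eq_false_iff.mp h1.symm).1, (Bool.or_eq_false_iff.mp h1.symm).2⟩
  have lemB : ∀ m : ℕ, ∀ r : ZMod L × ZMod L, s r = false →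
      s (r.1 - m, r.2 - m) = false := by
    intro m
    induction m with
    | zero => intro r hr; simpa using hr
    | succ k ih =>
      intro r hr
      have h1 := (key r hr).2
      have h2 := ih _ h1
      have e1 : r.1 - 1 - (k : ZMod L) = r.1 - ((k : ℕ) + 1 : ℕ) := by
        push_cast; ring
      have e2 : r.2 - 1 - (k : ZMod L) = r.2 - ((k : ℕ) + 1 : ℕ) := by
        push_cast; ring
      simpa [e1, e2] using h2
  have lemA : ∀ n : ℕ, ∀ r : ZMod L × ZMod L, s r = false →
      s (r.1 + n, r.2) = false := by
    intro n
    induction n with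
    | zero => intro r hr; simpa using hr
    | succ k ih =>
      intro r hr
      have h2 := ih _ (key r hr).1
      have e1 : r.1 + 1 + (k : ZMod L) = r.1 + ((k : ℕ) + 1 : ℕ) := by
        push_cast; ring
      simpa [e1] using h2
  intro t
  haveI : NeZero L := ⟨by omega⟩
  set b := (r0.2 - t.2).val with hb
  set a := (t.1 - r0.1 + (b : ZMod L)).val with ha
  have hbcast : (b : ZMod L) = r0.2 - t.2 := by
    simp [hb, ZMod.natCast_val, ZMod.cast_id]
  have hacast : (a : ZMod L) = t.1 - r0.1 + (b : ZMod L) := by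
    simp [ha, ZMod.natCast_val, ZMod.cast_id]
  have h1 := lemB b r0 hr0
  have h2 := lemA a _ h1
  have e1 : r0.1 - (b : ZMod L) + (a : ZMod L) = t.1 := by
    rw [hacast]; ring
  have e2 : r0.2 - (b : ZMod L) = t.2 := by
    rw [hbcast]; ring
  rw [e1, e2] at h2
  simpa using h2
end

section
/- Factorizing the master equation ∂_t m = −m + ηp + (1−p)·E[⋀-term + ⋁-term]/(normalization) under the independence assumption that n-point spin correlators equal m^n yields, for an automaton with |R^∧| = |R^∨| = n sites per update neighborhood, the equation ∂_t m = −m + ηp + ((1−p)/2^{n−1}) Σ_{k=0}^{⌊(n−1)/2⌋} C(n, 2k+1) m^{2k+1}. In particular for n = 2 this gives ∂_t m = p(η − m), and for n = 3 it gives ∂_t m = pη − ((1+3p)/4)m + ((1−p)/4)m³. -/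
lemma key (n : ℕ) (hn : 1 ≤ n) (m : ℝ) :
    (1+m)^n - (1-m)^n
      = 2 * ∑ k ∈ Finset.range ((n-1)/2+1), (n.choose (2*k+1) : ℝ) * m^(2*k+1) := by
  have h1 : (1+m)^n = ∑ j ∈ Finset.range (n+1), (n.choose j : ℝ) * m^j := by
    rw [add_comm, add_pow]; simp [mul_comm]
  have h2 : (1-m)^n = ∑ j ∈ Finset.range (n+1), (n.choose j : ℝ) * (-m)^j := by
    have h : (1 - m) = (-m) + 1 := by ring
    rw [h, add_pow]; simp [mul_comm]
  rw [h1, h2, ← Finset.sum_sub_distrib]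
  have h3 : ∀ j ∈ Finset.range (n+1),
      (n.choose j : ℝ) * m^j - (n.choose j : ℝ) * (-m)^j
        = if j % 2 = 1 then 2 * ((n.choose j : ℝ) * m^j) else 0 := by
    intro j _
    rcases Nat.even_or_odd j with he | ho
    · simp [Nat.even_iff.mp he, he.neg_pow]
    · rw [if_pos (Nat.odd_iff.mp ho), ho.neg_pow]; ring
  rw [Finset.sum_congr rfl h3, ← Finset.sum_filter, Finset.mul_sum]
  apply Finset.sum_nbij' (fun j => (j-1)/2) (fun k => 2*k+1)
  · intro j hj
    simp only [Finset.mem_filter, Finset.mem_range] at hj ⊢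
    omega
  · intro k hk
    simp only [Finset.mem_filter, Finset.mem_range] at hk ⊢
    omega
  · intro j hj
    simp only [Finset.mem_filter, Finset.mem_range] at hj
    omega
  · intro k hk
    omega
  · intro j hj
    simp only [Finset.mem_filter, Finset.mem_range] at hj
    have h : 2 * ((j-1)/2) + 1 = j := by omega
    simp only [h]
/-- Mean-field factorization of the master equation.  For an automaton whose
∧ and ∨ update neighborhoods each contain `n` sites (each update applied with
probability 1/2 when the noise, of strength `p` and bias `η`, does not act),
the independence assumption `E[∏ sᵢ] = mⁿ` yields
`∂ₜm = −m + ηp + ((1−p)/2^{n−1}) Σₖ C(n,2k+1) m^{2k+1}`;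
for `n = 2` this reduces to `∂ₜm = p(η−m)`, and for `n = 3` to
`∂ₜm = pη − ((1+3p)/4)m + ((1−p)/4)m³`. -/
theorem meanfield_master_equation (n : ℕ) (hn : 1 ≤ n) (p η m : ℝ) :
    (-m + η * p + (1 - p) * ((2 * ((1 + m) / 2) ^ n - 1)
        + (1 - 2 * ((1 - m) / 2) ^ n)) / 2
      = -m + η * p + (1 - p) / 2 ^ (n - 1) *
          ∑ k ∈ Finset.range ((n - 1) / 2 + 1),
            (n.choose (2 * k + 1) : ℝ) * m ^ (2 * k + 1)) ∧
    (-m + η * p + (1 - p) * ((2 * ((1 + m) / 2) ^ 2 - 1)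
        + (1 - 2 * ((1 - m) / 2) ^ 2)) / 2 = p * (η - m)) ∧
    (-m + η * p + (1 - p) * ((2 * ((1 + m) / 2) ^ 3 - 1)
        + (1 - 2 * ((1 - m) / 2) ^ 3)) / 2
      = p * η - (1 + 3 * p) / 4 * m + (1 - p) / 4 * m ^ 3) := by
  refine ⟨?_, by ring, by ring⟩
  have hk := key n hn m
  have hdiv : ∀ x : ℝ, (x / 2) ^ n = x ^ n / 2 ^ n := fun x => div_pow x 2 n
  have h2n : (2 : ℝ) ^ n = 2 * 2 ^ (n - 1) := by
    rw [← pow_succ']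
    congr 1
    omega
  have hne : (2 : ℝ) ^ (n - 1) ≠ 0 := by positivity
  rw [hdiv, hdiv, h2n]
  field_simp
  linear_combination (1 - p) * hk
end

section
/- In the cluster mean-field disordered fixed point of the R₂ squeezing code (m = f¹⁻ = f²⁻ = 0), the symmetric fluctuation variables satisfy f¹⁺ = √(f²⁺) = (1 − √(1 − ζ²))/ζ where ζ = (1−p)/d; moreover as d → ∞, f¹⁺ = (1−p)/(2d) + O(1/d²). -/
open Asymptotics

/-- At the disordered fixed point of the cluster mean-field equations of the
R₂ squeezing code (`m = f¹⁻ = f²⁻ = 0`), the symmetric fluctuation variables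
`f¹⁺ = (1 − √(1−ζ²))/ζ` and `f²⁺ = (f¹⁺)²`, with `ζ = (1−p)/d`, solve the
stationarity conditions `0 = −2f¹⁺ + ζ(1 + f²⁺)` and
`0 = −2f²⁺ + ζ(f¹⁺ + f¹⁺f²⁺)`; moreover `f¹⁺ = ζ/2 + O(ζ³)` as `ζ → 0⁺`
(i.e. `f¹⁺ = (1−p)/(2d) + O(1/d²)` as `d → ∞`). -/
theorem r2_disordered_fluctuations :
    (∀ ζ : ℝ, ζ ∈ Set.Ioo (0 : ℝ) 1 →
      -2 * ((1 - Real.sqrt (1 - ζ ^ 2)) / ζ)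
          + ζ * (1 + ((1 - Real.sqrt (1 - ζ ^ 2)) / ζ) ^ 2) = 0 ∧
      -2 * ((1 - Real.sqrt (1 - ζ ^ 2)) / ζ) ^ 2
          + ζ * ((1 - Real.sqrt (1 - ζ ^ 2)) / ζ
            + ((1 - Real.sqrt (1 - ζ ^ 2)) / ζ)
              * ((1 - Real.sqrt (1 - ζ ^ 2)) / ζ) ^ 2) = 0) ∧
    (fun ζ : ℝ => (1 - Real.sqrt (1 - ζ ^ 2)) / ζ - ζ / 2)
      =O[nhdsWithin 0 (Set.Ioi 0)] fun ζ : ℝ => ζ ^ 3 := by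
  constructor
  · intro ζ hζ
    obtain ⟨h0, h1⟩ := hζ
    have hne : ζ ≠ 0 := ne_of_gt h0
    have hnonneg : (0:ℝ) ≤ 1 - ζ ^ 2 := by nlinarith
    have hs : Real.sqrt (1 - ζ ^ 2) ^ 2 = 1 - ζ ^ 2 := Real.sq_sqrt hnonneg
    have heq : -2 * ((1 - Real.sqrt (1 - ζ ^ 2)) / ζ)
        + ζ * (1 + ((1 - Real.sqrt (1 - ζ ^ 2)) / ζ) ^ 2) = 0 := by
      field_simp
      nlinarith [hs]
    refine ⟨heq, ?_⟩
    linear_combination ((1 - Real.sqrt (1 - ζ ^ 2)) / ζ) * heq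
  · rw [isBigO_iff]
    refine ⟨1, ?_⟩
    filter_upwards [Ioo_mem_nhdsGT_of_mem (by norm_num : (0:ℝ) ∈ Set.Ico (0:ℝ) 1)]
      with ζ hζ
    obtain ⟨h0, h1⟩ := hζ
    have hne : ζ ≠ 0 := ne_of_gt h0
    have hnonneg : (0:ℝ) ≤ 1 - ζ ^ 2 := by nlinarith
    have hs : Real.sqrt (1 - ζ ^ 2) ^ 2 = 1 - ζ ^ 2 := Real.sq_sqrt hnonneg
    have hs0 : 0 ≤ Real.sqrt (1 - ζ ^ 2) := Real.sqrt_nonneg _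
    set s := Real.sqrt (1 - ζ ^ 2)
    have hle : (1 - s) / ζ - ζ / 2 ≤ ζ ^ 3 := by
      rw [div_sub' hne, div_le_iff₀ h0]
      nlinarith [hs, hs0, sq_nonneg (1 - s)]
    have hge : 0 ≤ (1 - s) / ζ - ζ / 2 := by
      rw [div_sub' hne, le_div_iff₀ h0]
      nlinarith [sq_nonneg (1 - s)]
    rw [Real.norm_eq_abs, Real.norm_eq_abs, abs_of_nonneg hge, one_mul,
      abs_of_nonneg (by positivity : (0:ℝ) ≤ ζ ^ 3)]
    exact hle
end

section
/- Linearizing the cluster mean-field equations of the R₂ squeezing code about its disordered fixed point, the disordered state loses stability exactly at p_c = 1/(1 + 4d²); in particular p_c = 1/17 in dimension d = 2, and p_c ~ 1/(4d²) as d → ∞. -/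
open Filter

set_option maxHeartbeats 1600000 in
/-- Linearizing the cluster mean-field equations of the R₂ squeezing code in
`(m, f¹⁻, f²⁻)` about the disordered fixed point (with the symmetric variables
at their disordered values `f¹⁺ = (1−√(1−ζ²))/ζ`, `f²⁺ = (f¹⁺)²`,
`ζ = (1−p)/d`, and `η = 0`), the Jacobian has a zero eigenvalue precisely at
`p_c = 1/(1+4d²)`; in particular `p_c = 1/17` for `d = 2`, and
`p_c ~ 1/(4d²)` as `d → ∞`. -/
theorem r2_cluster_meanfield_threshold (d : ℕ) (hd : 2 ≤ d) (p : ℝ)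
    (hp : p ∈ Set.Icc (0 : ℝ) 1) :
    (let ζ : ℝ := (1 - p) / d
     let f1 : ℝ := (1 - Real.sqrt (1 - ζ ^ 2)) / ζ
     let f2 : ℝ := f1 ^ 2
     let J : Matrix (Fin 3) (Fin 3) ℝ :=
       !![-p, 0, (1 - p) / 2;
          ζ * (1 - f2), -2, ζ;
          ζ * f1 * (1 - f2), ζ * (1 + f2), -2 + ζ * f1]
     J.det = 0 ↔ p = 1 / (1 + 4 * (d : ℝ) ^ 2)) ∧
    (1 : ℝ) / (1 + 4 * (2 : ℝ) ^ 2) = 1 / 17 ∧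
    Tendsto (fun k : ℕ => (1 / (1 + 4 * (k : ℝ) ^ 2)) * (4 * (k : ℝ) ^ 2))
      atTop (nhds 1) := by
  obtain ⟨hp0, hp1⟩ := hp
  have hd2 : (2 : ℝ) ≤ (d : ℝ) := by exact_mod_cast hd
  have hdpos : (0 : ℝ) < d := by linarith
  have hd4 : (0:ℝ) < 1 + 4 * (d:ℝ)^2 := by positivity
  refine ⟨?_, by norm_num, ?_⟩
  · -- the determinant part
    intro ζ f1 f2 J
    have hJ : J.det = -p * ((-2) * (-2 + ζ * f1) - ζ * (ζ * (1 + f2)))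
        - 0 * (ζ * (1 - f2) * (-2 + ζ * f1) - ζ * (ζ * f1 * (1 - f2)))
        + (1 - p) / 2 * (ζ * (1 - f2) * (ζ * (1 + f2)) - (-2) * (ζ * f1 * (1 - f2))) := by
      rw [Matrix.det_fin_three]
      simp [J, Matrix.cons_val_zero, Matrix.cons_val_one]
      ring
    rcases eq_or_lt_of_le hp1 with h1 | h1
    · -- p = 1 : ζ = 0, f1 = 0, det = -4 ≠ 0
      have hζ : ζ = 0 := by simp [ζ, ← h1]
      have hf1 : f1 = 0 := by simp [f1, hζ]
      rw [hJ, hζ, hf1]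
      constructor
      · intro h
        exfalso
        norm_num [f2, hf1] at h
        linarith
      · intro h
        exfalso
        rw [← h1] at h
        have : 1 + 4 * (d:ℝ)^2 = 1 := by
          field_simp at h; linarith
        nlinarith
    · -- p < 1
      have hζpos : 0 < ζ := by
        apply div_pos <;> linarith
      have hζhalf : ζ ≤ 1 / 2 := by
        rw [div_le_div_iff₀ (by linarith) (by norm_num)]
        nlinarith
      set s : ℝ := Real.sqrt (1 - ζ ^ 2) with hs
      have hs2 : s ^ 2 = 1 - ζ ^ 2 := Real.sq_sqrt (by nlinarith)
      have hspos : 0 < s := Real.sqrt_pos.mpr (by nlinarith)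
      have hs1 : s < 1 := by nlinarith
      have h1s : (0:ℝ) < 1 + s := by linarith
      have h1s' : (0:ℝ) < 1 - s := by linarith
      have hζ2 : ζ ^ 2 = (1 - s) * (1 + s) := by linear_combination hs2
      have hf1 : f1 = (1 - s) / ζ := rfl
      have hζf1 : ζ * f1 = 1 - s := by
        rw [hf1]; field_simp
      have hf2 : f2 = (1 - s) / (1 + s) := by
        show ((1 - s) / ζ) ^ 2 = (1 - s) / (1 + s)
        rw [div_pow, hζ2, div_eq_div_iff (mul_pos h1s' h1s).ne' h1s.ne']
        ring
      have e1 : ζ * (ζ * (1 + f2)) = 2 * (1 - s) := by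
        rw [hf2, show ζ * (ζ * (1 + (1 - s) / (1 + s)))
            = ζ ^ 2 * (1 + (1 - s) / (1 + s)) from by ring, hζ2]
        field_simp
        ring
      have e2 : ζ * (1 - f2) * (ζ * (1 + f2)) = 4 * s * (1 - s) / (1 + s) := by
        rw [hf2, show ζ * (1 - (1 - s) / (1 + s)) * (ζ * (1 + (1 - s) / (1 + s)))
            = ζ ^ 2 * ((1 - (1 - s) / (1 + s)) * (1 + (1 - s) / (1 + s))) from by ring, hζ2]
        field_simp
        ring
      have hdet : J.det = 4 * s * (1 - 2 * p - s) / (1 + s) := by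
        rw [hJ, e2, e1, hζf1, hf2]
        field_simp
        ring
      have hζd : ζ * (d:ℝ) = 1 - p := by
        show (1 - p) / (d:ℝ) * d = 1 - p
        field_simp
      rw [hdet]
      constructor
      · intro h
        have hzero : 1 - 2 * p - s = 0 := by
          rcases mul_eq_zero.mp (div_eq_zero_iff.mp h |>.resolve_right (by linarith)) with h' | h'
          · exfalso; linarith
          · exact h'
        have hseq : s = 1 - 2 * p := by linarith
        rw [hseq] at hs2
        have hz : ζ ^ 2 = 4 * p * (1 - p) := by linear_combination hs2
        have h4 : (1 - p) * (1 - p) = (1 - p) * (4 * p * (d:ℝ) ^ 2) := by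
          linear_combination (-(ζ * (d:ℝ) + (1 - p))) * hζd + (d:ℝ) ^ 2 * hz
        have h5 : 1 - p = 4 * p * (d:ℝ) ^ 2 :=
          mul_left_cancel₀ (by linarith : (1:ℝ) - p ≠ 0) h4
        field_simp
        linear_combination -h5
      · intro h
        have hpval : p * (1 + 4 * (d:ℝ) ^ 2) = 1 := by
          rw [h]; field_simp
        have hp5 : p ≤ 1 / 2 := by
          rw [h, div_le_div_iff₀ hd4 (by norm_num)]
          nlinarith
        have hz2 : ζ ^ 2 * (d:ℝ) ^ 2 = (1 - p) ^ 2 := by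
          linear_combination (ζ * (d:ℝ) + (1 - p)) * hζd
        have key : (d:ℝ) ^ 2 * (1 - ζ ^ 2) = (d:ℝ) ^ 2 * ((1 - 2 * p) ^ 2) := by
          linear_combination (1 - p) * hpval - hz2
        have h1' : 1 - ζ ^ 2 = (1 - 2 * p) ^ 2 :=
          mul_left_cancel₀ (by positivity : ((d:ℝ) ^ 2) ≠ 0) key
        have hseq : s = 1 - 2 * p := by
          rw [hs, h1', Real.sqrt_sq (by linarith : (0:ℝ) ≤ 1 - 2 * p)]
        rw [hseq, sub_self, mul_zero, zero_div]
  · -- limit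
    have h1 : Tendsto (fun k : ℕ => 1 + 4 * (k : ℝ) ^ 2) atTop atTop := by
      apply tendsto_atTop_add_const_left
      exact (tendsto_pow_atTop (by norm_num)).comp tendsto_natCast_atTop_atTop |>.const_mul_atTop (by norm_num)
    have h2 : Tendsto (fun k : ℕ => 1 / (1 + 4 * (k : ℝ) ^ 2)) atTop (nhds 0) := by
      refine h1.inv_tendsto_atTop.congr (fun k => ?_); simp [one_div]
    have h3 : Tendsto (fun k : ℕ => 1 - 1 / (1 + 4 * (k : ℝ) ^ 2)) atTop (nhds 1) := by
      simpa using tendsto_const_nhds.sub h2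
    apply h3.congr
    intro k
    have hk : (0:ℝ) < 1 + 4 * (k:ℝ)^2 := by positivity
    field_simp
    ring
end
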